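/- (Root enumeration by a longest word) Let χ ∈ X_fin, n := |R^+(χ)|, and f : {1,...,n} → I such that the partial products w_t := s^{χ_{f,1}}_{f(1)}⋯s^{χ_{f,t}}_{f(t)} satisfy w_{y}(α_{f(y+1)}) ∈ R^+(χ) for 1 ≤ y ≤ n−1. Then the n elements w_{r-1}(α_{f(r)}) (1 ≤ r ≤ n) are pairwise distinct and R^+(χ) = { w_{r-1}(α_{f(r)}) : 1 ≤ r ≤ n }. -/

import Mathlib

/-- `ℤΠ`, the free `ℤ`-module with basis `Π = {α_1,…,α_N}`. -/
abbrev Mz (N : ℕ) := Fin N →₀ ℤ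

/-- The simple "root" `α_i`, the `i`-th basis element of `ℤΠ`. -/
noncomputable def alphav {N : ℕ} (i : Fin N) : Mz N := Finsupp.single i 1

/-- A bi-homomorphism `χ : ℤΠ × ℤΠ → ℂ*`. -/
def IsBihom {N : ℕ} (χ : Mz N → Mz N → ℂˣ) : Prop :=
  (∀ a b c : Mz N, χ a (b + c) = χ a b * χ a c) ∧
  (∀ a b c : Mz N, χ (a + b) c = χ a c * χ b c)

/-- `(m)_t := 1 + t + ⋯ + t^{m-1}`. -/
noncomputable def qnum (m : ℕ) (t : ℂ) : ℂ := ∑ j ∈ Finset.range m, t ^ j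

/-- `(m)_t! := ∏_{j=1}^m (j)_t`. -/
noncomputable def qfact (m : ℕ) (t : ℂ) : ℂ := ∏ j ∈ Finset.range m, qnum (j + 1) t

/-- `(m; t₁, t₂)! := ∏_{j=1}^m (1 - t₁^{j-1} t₂)`. -/
noncomputable def tfact (m : ℕ) (t₁ t₂ : ℂ) : ℂ := ∏ j ∈ Finset.range m, (1 - t₁ ^ j * t₂)

/-- The Cartan entry `c` (off-diagonal part) attached to `q = q_{ii}` and `r = q_{ij}q_{ji}`:
`⊥` (i.e. `-∞`) if `(m)_q!(m;q,r)! ≠ 0` for all `m`, and otherwise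
`-Max{m ∈ ℤ≥0 | (m)_q!(m;q,r)! ≠ 0}`. -/
noncomputable def cEntry (q r : ℂ) : WithBot ℤ :=
  letI := Classical.propDecidable
  if ∀ m : ℕ, qfact m q * tfact m q r ≠ 0 then ⊥
  else ((-((sSup {m : ℕ | qfact m q * tfact m q r ≠ 0} : ℕ) : ℤ) : ℤ) : WithBot ℤ)

/-- The generalized Cartan matrix `c^χ_{ij}` of a bi-homomorphism `χ`. -/
noncomputable def cMat {N : ℕ} (χ : Mz N → Mz N → ℂˣ) (i j : Fin N) : WithBot ℤ :=
  if i = j then 2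
  else cEntry (χ (alphav i) (alphav i))
    ((χ (alphav i) (alphav j) : ℂ) * (χ (alphav j) (alphav i) : ℂ))

/-- `c^χ_{ij}` as an integer (junk value `0` in the `-∞` case). -/
noncomputable def cInt {N : ℕ} (χ : Mz N → Mz N → ℂˣ) (i j : Fin N) : ℤ :=
  (cMat χ i j).unbotD 0

/-- The reflection `s^χ_i ∈ Aut_ℤ(ℤΠ)`, `s^χ_i(α_j) = α_j - c^χ_{ij} α_i`,
extended `ℤ`-linearly. -/
noncomputable def sMap {N : ℕ} (χ : Mz N → Mz N → ℂˣ) (i : Fin N) (v : Mz N) : Mz N :=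
  v - (v.sum fun j n => n * cInt χ i j) • alphav i

/-- The Lusztig twist `i★χ`, `(i★χ)(α,β) := χ(s^χ_i α, s^χ_i β)`. -/
noncomputable def starB {N : ℕ} (i : Fin N) (χ : Mz N → Mz N → ℂˣ) :
    Mz N → Mz N → ℂˣ :=
  fun a b => χ (sMap χ i a) (sMap χ i b)

/-- χ' is obtained from χ by a finite sequence of Lusztig twists (χ' ∼ χ). -/
def Reachable {N : ℕ} (χ χ' : Mz N → Mz N → ℂˣ) : Prop :=
  ∃ l : List (Fin N), χ' = l.foldl (fun ψ i => starB i ψ) χ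

/-- The iterated twists χ_{f,t}: χ_{f,0} = χ and χ_{f,t} = f(t)★χ_{f,t-1}. -/
noncomputable def chif {N : ℕ} (χ : Mz N → Mz N → ℂˣ) (f : ℕ → Fin N) :
    ℕ → (Mz N → Mz N → ℂˣ)
  | 0 => χ
  | (t + 1) => starB (f (t + 1)) (chif χ f t)

/-- The partial products w_t = s^{χ_{f,1}}_{f(1)} ∘ ⋯ ∘ s^{χ_{f,t}}_{f(t)}. -/
noncomputable def wt {N : ℕ} (χ : Mz N → Mz N → ℂˣ) (f : ℕ → Fin N) :
    ℕ → (Mz N → Mz N)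
  | 0 => id
  | (t + 1) => wt χ f t ∘ sMap (chif χ f (t + 1)) (f (t + 1))

/-- The nonzero elements of ℤ≥0 Π. -/
def PosCone (N : ℕ) : Set (Mz N) := {v | v ≠ 0 ∧ ∀ k, 0 ≤ v k}

/-- The elements of -ℤ≥0 Π. -/
def NegCone (N : ℕ) : Set (Mz N) := {v | ∀ k, v k ≤ 0}


section RootEnumAux

variable {N : ℕ}

private lemma cInt_self' (χ : Mz N → Mz N → ℂˣ) (i : Fin N) : cInt χ i i = 2 := by
  simp only [cInt, cMat, if_pos rfl]
  rfl

private lemma sum_alpha' (c : Fin N → ℤ) (i : Fin N) :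
    (alphav i).sum (fun j n => n * c j) = c i := by
  simp [alphav, Finsupp.sum_single_index]

private lemma sum_neg'' (c : Fin N → ℤ) (v : Mz N) :
    (-v).sum (fun j n => n * c j) = -(v.sum (fun j n => n * c j)) := by
  rw [← zero_sub, Finsupp.sum_sub_index (fun a b₁ b₂ => by ring), Finsupp.sum_zero_index,
    zero_sub]

private lemma sum_sub_smul' (c : Fin N → ℤ) (v : Mz N) (m : ℤ) (i : Fin N) :
    (v - m • alphav i).sum (fun j n => n * c j) = v.sum (fun j n => n * c j) - m * c i := by
  rw [Finsupp.sum_sub_index (fun a b₁ b₂ => by ring)]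
  congr 1
  rw [show m • alphav i = Finsupp.single i m by simp [alphav],
    Finsupp.sum_single_index (by ring)]

private lemma sMap_alpha' (χ : Mz N → Mz N → ℂˣ) (i : Fin N) :
    sMap χ i (alphav i) = -alphav i := by
  unfold sMap
  rw [sum_alpha', cInt_self']
  module

private lemma sMap_sMap' (χ : Mz N → Mz N → ℂˣ) (i : Fin N) (v : Mz N) :
    sMap χ i (sMap χ i v) = v := by
  unfold sMap
  rw [sum_sub_smul', cInt_self']
  module

private lemma sMap_neg' (χ : Mz N → Mz N → ℂˣ) (i : Fin N) (v : Mz N) :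
    sMap χ i (-v) = -sMap χ i v := by
  unfold sMap
  rw [sum_neg'']
  module

private lemma sMap_inj' (χ : Mz N → Mz N → ℂˣ) (i : Fin N) :
    Function.Injective (sMap χ i) :=
  Function.Involutive.injective (sMap_sMap' χ i)

private lemma wt_neg' (χ : Mz N → Mz N → ℂˣ) (f : ℕ → Fin N) :
    ∀ t (v : Mz N), wt χ f t (-v) = -wt χ f t v := by
  intro t
  induction t with
  | zero => intro v; rfl
  | succ t ih =>
    intro v
    show wt χ f t (sMap _ _ (-v)) = -wt χ f t (sMap _ _ v)
    rw [sMap_neg', ih]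

private lemma wt_inj' (χ : Mz N → Mz N → ℂˣ) (f : ℕ → Fin N) :
    ∀ t, Function.Injective (wt χ f t) := by
  intro t
  induction t with
  | zero => exact fun a b h => h
  | succ t ih => exact ih.comp (sMap_inj' _ _)

private lemma reach_chif' (χ : Mz N → Mz N → ℂˣ) (f : ℕ → Fin N) :
    ∀ t, Reachable χ (chif χ f t) := by
  intro t
  induction t with
  | zero => exact ⟨[], rfl⟩
  | succ t ih =>
    obtain ⟨l, hl⟩ := ih
    exact ⟨l ++ [f (t + 1)], by simp [List.foldl_append, chif, hl]⟩

private lemma neg_alpha_not_pos' (i : Fin N) : -alphav i ∉ PosCone N := by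
  intro h
  have := h.2 i
  simp [alphav] at this

private lemma pos_neg_absurd' {v : Mz N} (h1 : v ∈ PosCone N) (h2 : -v ∈ PosCone N) :
    False := by
  apply h1.1
  ext k
  have ha := h1.2 k
  have hb := h2.2 k
  simp only [Finsupp.neg_apply] at hb
  simp only [Finsupp.coe_zero, Pi.zero_apply]
  omega

end RootEnumAux

/-- Root enumeration by a longest word: if w_y(α_{f(y+1)}) ∈ R⁺(χ) for 1 ≤ y ≤ n-1,
where n = |R⁺(χ)|, then the n elements w_{r-1}(α_{f(r)}) (1 ≤ r ≤ n) are pairwise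
distinct and R⁺(χ) = { w_{r-1}(α_{f(r)}) : 1 ≤ r ≤ n }. -/
theorem root_enumeration {N : ℕ} (χ : Mz N → Mz N → ℂˣ) (hχ : IsBihom χ)
    (Rp : (Mz N → Mz N → ℂˣ) → Set (Mz N))
    (hRfin : (Rp χ).Finite)
    (hRsub : ∀ χ', Reachable χ χ' → Rp χ' ⊆ PosCone N)
    (hRsimple : ∀ χ', Reachable χ χ' → ∀ i : Fin N, alphav i ∈ Rp χ')
    (hRrefl : ∀ χ', Reachable χ χ' → ∀ i : Fin N,
      sMap χ' i '' (Rp χ' \ {alphav i}) = Rp (starB i χ') \ {alphav i})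
    (hstar : ∀ χ', Reachable χ χ' → ∀ i : Fin N,
      starB i (starB i χ') = χ' ∧ sMap (starB i χ') i = sMap χ' i)
    (f : ℕ → Fin N)
    (hpos : ∀ y : ℕ, 1 ≤ y → y ≤ (Rp χ).ncard - 1 →
      wt χ f y (alphav (f (y + 1))) ∈ Rp χ) :
    Set.InjOn (fun r : ℕ => wt χ f (r - 1) (alphav (f r))) (Set.Icc 1 (Rp χ).ncard) ∧
    Rp χ = (fun r : ℕ => wt χ f (r - 1) (alphav (f r))) '' Set.Icc 1 (Rp χ).ncard := by
    classical
  set n := (Rp χ).ncard with hn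
  set β : ℕ → Mz N := fun r => wt χ f (r - 1) (alphav (f r)) with hβ
  have hβs : ∀ t : ℕ, β (t + 1) = wt χ f t (alphav (f (t + 1))) := by
    intro t; rw [hβ]; simp
  have sstep : ∀ t, sMap (chif χ f (t + 1)) (f (t + 1)) = sMap (chif χ f t) (f (t + 1)) := by
    intro t
    exact (hstar (chif χ f t) (reach_chif' χ f t) (f (t + 1))).2
  have refl_back : ∀ t,
      sMap (chif χ f (t + 1)) (f (t + 1)) ''
        (Rp (chif χ f (t + 1)) \ {alphav (f (t + 1))})
        = Rp (chif χ f t) \ {alphav (f (t + 1))} := by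
    intro t
    have h := hRrefl (chif χ f t) (reach_chif' χ f t) (f (t + 1))
    rw [sstep t, show Rp (chif χ f (t + 1)) = Rp (starB (f (t + 1)) (chif χ f t)) from rfl,
      ← h, Set.image_image]
    simp [sMap_sMap']
  have image_step : ∀ t, wt χ f (t + 1) '' Rp (chif χ f (t + 1))
      = ((wt χ f t '' Rp (chif χ f t)) \ {β (t + 1)}) ∪ {-β (t + 1)} := by
    intro t
    have hα1 : alphav (f (t + 1)) ∈ Rp (chif χ f (t + 1)) :=
      hRsimple _ (reach_chif' χ f (t + 1)) _
    have hα0 : alphav (f (t + 1)) ∈ Rp (chif χ f t) :=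
      hRsimple _ (reach_chif' χ f t) _
    have hsplit : Rp (chif χ f (t + 1))
        = (Rp (chif χ f (t + 1)) \ {alphav (f (t + 1))}) ∪ {alphav (f (t + 1))} :=
      (Set.diff_union_of_subset (Set.singleton_subset_iff.mpr hα1)).symm
    have hw : wt χ f (t + 1) = wt χ f t ∘ sMap (chif χ f (t + 1)) (f (t + 1)) := rfl
    rw [hsplit, Set.image_union, hw, Set.image_comp, refl_back t,
      Set.image_diff (wt_inj' χ f t)]
    congr 1
    · congr 1
      rw [Set.image_singleton, hβs t]
    · rw [Set.image_singleton, Function.comp_apply, sMap_alpha', wt_neg', hβs t]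
  have main : ∀ t, t ≤ n →
      (∀ r, 1 ≤ r → r ≤ t → β r ∈ Rp χ) ∧
      (∀ r s, 1 ≤ r → r < s → s ≤ t → β r ≠ β s) ∧
      wt χ f t '' Rp (chif χ f t)
        = (Rp χ \ (β '' Set.Icc 1 t)) ∪ (fun v => -v) '' (β '' Set.Icc 1 t) := by
    intro t
    induction t with
    | zero =>
      intro _
      refine ⟨by omega, by omega, ?_⟩
      have : Set.Icc (1 : ℕ) 0 = ∅ := Set.Icc_eq_empty (by omega)
      simp [this, wt, chif]
    | succ t ih =>
      intro ht
      obtain ⟨hmem, hdist, himg⟩ := ih (by omega)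
      have hb : β (t + 1) ∈ Rp χ := by
        rcases Nat.eq_zero_or_pos t with h0 | h1
        · subst h0
          rw [hβs 0]
          exact hRsimple χ ⟨[], rfl⟩ (f 1)
        · rw [hβs t]
          exact hpos t h1 (by omega)
      have hbnotneg : β (t + 1) ∉ (fun v => -v) '' (β '' Set.Icc 1 t) := by
        rintro ⟨u, ⟨r, hr, rfl⟩, hu⟩
        simp only at hu
        have h1 : β r ∈ Rp χ := hmem r hr.1 hr.2
        have h2 : -β (t + 1) ∈ PosCone N := by
          rw [← hu, neg_neg]; exact hRsub χ ⟨[], rfl⟩ h1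
        exact pos_neg_absurd' (hRsub χ ⟨[], rfl⟩ hb) h2
      have hbnotB : β (t + 1) ∉ β '' Set.Icc 1 t := by
        rintro ⟨r, hr, hre⟩
        have hmemneg : -β (t + 1) ∈ wt χ f t '' Rp (chif χ f t) := by
          rw [himg]
          right
          exact ⟨β r, ⟨r, hr, rfl⟩, by rw [hre]⟩
        obtain ⟨γ, hγ, hγe⟩ := hmemneg
        have hγ2 : γ = -alphav (f (t + 1)) := by
          apply wt_inj' χ f t
          rw [hγe, wt_neg', hβs t]
        rw [hγ2] at hγ
        exact neg_alpha_not_pos' _ (hRsub _ (reach_chif' χ f t) hγ)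
      refine ⟨?_, ?_, ?_⟩
      · intro r h1 h2
        rcases Nat.lt_succ_iff_lt_or_eq.mp (Nat.lt_succ_of_le h2) with h | h
        · exact hmem r h1 (by omega)
        · rw [h]; exact hb
      · intro r s h1 hrs hs he
        rcases Nat.lt_succ_iff_lt_or_eq.mp (Nat.lt_succ_of_le hs) with h | h
        · exact hdist r s h1 hrs (by omega) he
        · subst h
          exact hbnotB ⟨r, Set.mem_Icc.mpr ⟨h1, by omega⟩, he⟩
      · rw [image_step t, himg]
        have hIcc : Set.Icc 1 (t + 1) = insert (t + 1) (Set.Icc 1 t) := by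
          ext x; simp only [Set.mem_Icc, Set.mem_insert_iff]; omega
        rw [hIcc, Set.image_insert_eq, Set.image_insert_eq, Set.union_diff_distrib,
          Set.diff_singleton_eq_self hbnotneg, Set.diff_diff, Set.union_singleton,
          Set.union_singleton, Set.union_insert]
  obtain ⟨hmem, hdist, _⟩ := main n le_rfl
  have hinj : Set.InjOn β (Set.Icc 1 n) := by
    intro r hr s hs he
    rw [Set.mem_Icc] at hr hs
    rcases lt_trichotomy r s with h | h | h
    · exact absurd he (hdist r s hr.1 h hs.2)
    · exact h
    · exact absurd he.symm (hdist s r hs.1 h hr.2)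
  refine ⟨hinj, ?_⟩
  have hsub' : β '' Set.Icc 1 n ⊆ Rp χ := by
    rintro _ ⟨r, hr, rfl⟩
    rw [Set.mem_Icc] at hr
    exact hmem r hr.1 hr.2
  have hcard : (β '' Set.Icc 1 n).ncard = n := by
    rw [Set.ncard_image_of_injOn hinj, ← Finset.coe_Icc, Set.ncard_coe_finset, Nat.card_Icc]
    omega
  exact (Set.eq_of_subset_of_ncard_le hsub' (by rw [hcard]) hRfin).symm
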